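/- Let γ₁, …, γ_m be distinct unit vectors in ℝ² and c₁, …, c_m nonzero real weights, and suppose the star configuration is symmetric. Then the star transform S is not injective on compactly supported C² vector fields: there exists a vector field f = (f₁, f₂) with f₁, f₂ ∈ C²_c(ℝ²), not identically zero, such that S f(x) = 0 for all x ∈ ℝ². -/

import Mathlib

open MeasureTheory Matrix
open scoped ContDiff

noncomputable section

/-- Dot product on ℝ². -/
def dot2 (u v : ℝ × ℝ) : ℝ := u.1 * v.1 + u.2 * v.2

/-- `x^⊥ = (-x₂, x₁)`. -/
def perp2 (x : ℝ × ℝ) : ℝ × ℝ := (-x.2, x.1)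

/-- Divergent beam transform `X_u h (x) = ∫₀^∞ h(x + t u) dt`. -/
def Xbeam (u : ℝ × ℝ) (h : ℝ × ℝ → ℝ) (x : ℝ × ℝ) : ℝ :=
  ∫ t in Set.Ioi (0 : ℝ), h (x + t • u)

/-- First moment divergent beam transform `X¹_u h (x) = ∫₀^∞ t h(x + t u) dt`. -/
def Xmom (u : ℝ × ℝ) (h : ℝ × ℝ → ℝ) (x : ℝ × ℝ) : ℝ :=
  ∫ t in Set.Ioi (0 : ℝ), t * h (x + t • u)

/-- Directional derivative `D_u h = u · ∇ h`. -/
def Ddir (u : ℝ × ℝ) (h : ℝ × ℝ → ℝ) (x : ℝ × ℝ) : ℝ := fderiv ℝ h x u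

/-- Twice continuously differentiable, compactly supported. -/
def IsC2c (h : ℝ × ℝ → ℝ) : Prop := ContDiff ℝ 2 h ∧ HasCompactSupport h

/-- `div f = ∂f₁/∂x₁ + ∂f₂/∂x₂`. -/
def divf (f₁ f₂ : ℝ × ℝ → ℝ) (x : ℝ × ℝ) : ℝ :=
  fderiv ℝ f₁ x (1, 0) + fderiv ℝ f₂ x (0, 1)

/-- `curl f = ∂f₂/∂x₁ - ∂f₁/∂x₂`. -/
def curlf (f₁ f₂ : ℝ × ℝ → ℝ) (x : ℝ × ℝ) : ℝ :=
  fderiv ℝ f₂ x (1, 0) - fderiv ℝ f₁ x (0, 1)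

/-- Longitudinal V-line transform `L f = -X_u (f·u) + X_v (f·v)`. -/
def VlineL (u v : ℝ × ℝ) (f₁ f₂ : ℝ × ℝ → ℝ) (x : ℝ × ℝ) : ℝ :=
  - Xbeam u (fun y => f₁ y * u.1 + f₂ y * u.2) x
  + Xbeam v (fun y => f₁ y * v.1 + f₂ y * v.2) x

/-- Transverse V-line transform `T f = -X_u (f·u^⊥) + X_v (f·v^⊥)`. -/
def VlineT (u v : ℝ × ℝ) (f₁ f₂ : ℝ × ℝ → ℝ) (x : ℝ × ℝ) : ℝ :=
  - Xbeam u (fun y => f₁ y * (perp2 u).1 + f₂ y * (perp2 u).2) x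
  + Xbeam v (fun y => f₁ y * (perp2 v).1 + f₂ y * (perp2 v).2) x

/-- First moment longitudinal V-line transform `I f = -X¹_u (f·u) + X¹_v (f·v)`. -/
def VmomL (u v : ℝ × ℝ) (f₁ f₂ : ℝ × ℝ → ℝ) (x : ℝ × ℝ) : ℝ :=
  - Xmom u (fun y => f₁ y * u.1 + f₂ y * u.2) x
  + Xmom v (fun y => f₁ y * v.1 + f₂ y * v.2) x

/-- First moment transverse V-line transform `J f = -X¹_u (f·u^⊥) + X¹_v (f·v^⊥)`. -/
def VmomT (u v : ℝ × ℝ) (f₁ f₂ : ℝ × ℝ → ℝ) (x : ℝ × ℝ) : ℝ :=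
  - Xmom u (fun y => f₁ y * (perp2 u).1 + f₂ y * (perp2 u).2) x
  + Xmom v (fun y => f₁ y * (perp2 v).1 + f₂ y * (perp2 v).2) x

/-- Radon transform `R h (ψ, s) = ∫_ℝ h (s ψ + t ψ^⊥) dt`. -/
def Radon2 (h : ℝ × ℝ → ℝ) (ψ : ℝ × ℝ) (s : ℝ) : ℝ :=
  ∫ t : ℝ, h (s • ψ + t • perp2 ψ)

/-- The (vector-valued) star transform. -/
def starS (m : ℕ) (γ : Fin m → ℝ × ℝ) (c : Fin m → ℝ)
    (f₁ f₂ : ℝ × ℝ → ℝ) (x : ℝ × ℝ) : ℝ × ℝ :=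
  ∑ i, c i •
    (Xbeam (γ i) (fun y => f₁ y * (γ i).1 + f₂ y * (γ i).2) x,
     Xbeam (γ i) (fun y => f₁ y * (perp2 (γ i)).1 + f₂ y * (perp2 (γ i)).2) x)

/-- `γ(ψ) = -∑ cᵢ γᵢ / (ψ·γᵢ)`. -/
def starGamma (m : ℕ) (γ : Fin m → ℝ × ℝ) (c : Fin m → ℝ) (ψ : ℝ × ℝ) : ℝ × ℝ :=
  - ∑ i, (c i / dot2 ψ (γ i)) • γ i

/-- A star configuration is symmetric if `m = 2k` and, after re-indexing by a
permutation, `γᵢ = -γ_{k+i}` and `cᵢ = -c_{k+i}` for `i = 1, …, k`. -/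
def StarSymmetric (m : ℕ) (γ : Fin m → ℝ × ℝ) (c : Fin m → ℝ) : Prop :=
  ∃ k : ℕ, ∃ hk : m = 2 * k, ∃ σ : Equiv.Perm (Fin m),
    ∀ i : Fin m, ∀ hi : (i : ℕ) < k,
      γ (σ i) = - γ (σ ⟨(i : ℕ) + k, by omega⟩) ∧
      c (σ i) = - c (σ ⟨(i : ℕ) + k, by omega⟩)

namespace Stmt17Aux

/-- Directional derivative operator. -/
def Dop (u : ℝ × ℝ) (h : ℝ × ℝ → ℝ) : ℝ × ℝ → ℝ := fun x => fderiv ℝ h x u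

lemma infty_add_one : (∞ : WithTop ℕ∞) + 1 ≤ ∞ := by
  norm_num

lemma Dop_contDiff {u : ℝ × ℝ} {h : ℝ × ℝ → ℝ} (hh : ContDiff ℝ ∞ h) :
    ContDiff ℝ ∞ (Dop u h) := by
  have h1 : ContDiff ℝ ∞ (fderiv ℝ h) := hh.fderiv_right infty_add_one
  exact (ContinuousLinearMap.apply ℝ ℝ u).contDiff.comp h1

lemma Dop_support {u : ℝ × ℝ} {h : ℝ × ℝ → ℝ} (hh : HasCompactSupport h) :
    HasCompactSupport (Dop u h) := by
  have h1 : HasCompactSupport (fderiv ℝ h) := hh.fderiv ℝ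
  exact h1.comp_left (g := fun L : (ℝ × ℝ) →L[ℝ] ℝ => L u) rfl

lemma Dop_comm {u v : ℝ × ℝ} {h : ℝ × ℝ → ℝ} (hh : ContDiff ℝ ∞ h) :
    Dop u (Dop v h) = Dop v (Dop u h) := by
  funext x
  have hd : DifferentiableAt ℝ (fderiv ℝ h) x :=
    ((hh.fderiv_right infty_add_one).differentiable (by norm_num)).differentiableAt
  have key : ∀ a b : ℝ × ℝ,
      fderiv ℝ (fun y => fderiv ℝ h y b) x a = fderiv ℝ (fderiv ℝ h) x a b := by
    intro a b
    rw [fderiv_clm_apply hd (differentiableAt_const b)]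
    simp
  have hsym : fderiv ℝ (fderiv ℝ h) x u v = fderiv ℝ (fderiv ℝ h) x v u :=
    (hh.contDiffAt.isSymmSndFDerivAt (by rw [minSmoothness_of_isRCLikeNormedField]; exact WithTop.coe_le_coe.mpr le_top)).eq u v
  show fderiv ℝ (fun y => fderiv ℝ h y v) x u = fderiv ℝ (fun y => fderiv ℝ h y u) x v
  rw [key, key, hsym]


/-- Restriction of a compactly supported function to a line has compact support. -/
lemma line_comp_support {g : ℝ × ℝ → ℝ} (hg : HasCompactSupport g) {u : ℝ × ℝ}
    (hu : u ≠ 0) (x : ℝ × ℝ) : HasCompactSupport (fun t : ℝ => g (x + t • u)) := by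
  obtain ⟨R, hR⟩ := hg.isBounded.subset_closedBall 0
  have hu' : 0 < ‖u‖ := norm_pos_iff.mpr hu
  set T : ℝ := (R + ‖x‖) / ‖u‖ with hT
  apply HasCompactSupport.intro (isCompact_Icc (a := -T) (b := T))
  intro t ht
  have h1 : T < |t| := by
    by_contra h2
    push_neg at h2
    exact ht (Set.mem_Icc.mpr (abs_le.mp h2))
  apply image_eq_zero_of_notMem_tsupport
  intro hmem
  have h3 : ‖x + t • u‖ ≤ R := by
    have := hR hmem
    simpa [Metric.mem_closedBall, dist_zero_right] using this
  have h4 : ‖t • u‖ ≤ ‖x + t • u‖ + ‖x‖ := by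
    calc ‖t • u‖ = ‖(x + t • u) - x‖ := by congr 1; abel
    _ ≤ ‖x + t • u‖ + ‖x‖ := norm_sub_le _ _
  have h5 : ‖t • u‖ = |t| * ‖u‖ := by rw [norm_smul, Real.norm_eq_abs]
  have h6 : R + ‖x‖ < |t| * ‖u‖ := by
    rw [hT] at h1
    exact (div_lt_iff₀ hu').mp h1
  linarith

/-- Fundamental theorem of calculus along a line: the integral of a directional
derivative of a compactly supported smooth function along that direction vanishes. -/
lemma line_integral_Dop_eq_zero {u : ℝ × ℝ} (hu : u ≠ 0) {h : ℝ × ℝ → ℝ}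
    (hh : ContDiff ℝ ∞ h) (hsupp : HasCompactSupport h) (x : ℝ × ℝ) :
    ∫ t : ℝ, Dop u h (x + t • u) = 0 := by
  have hline : ∀ t : ℝ, HasDerivAt (fun s : ℝ => x + s • u) u t := fun t => by
    simpa using ((hasDerivAt_id t).smul_const u).const_add x
  have hF : ∀ t : ℝ, HasDerivAt (fun s : ℝ => h (x + s • u)) (Dop u h (x + t • u)) t := by
    intro t
    have hdh : HasFDerivAt h (fderiv ℝ h (x + t • u)) (x + t • u) :=
      ((hh.differentiable (by decide)) (x + t • u)).hasFDerivAt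
    exact hdh.comp_hasDerivAt t (hline t)
  have hcont : Continuous (fun t : ℝ => h (x + t • u)) :=
    hh.continuous.comp (by continuity)
  have hcont' : Continuous (fun t : ℝ => Dop u h (x + t • u)) :=
    (Dop_contDiff hh).continuous.comp (by continuity)
  have hFi : Integrable (fun t : ℝ => h (x + t • u)) :=
    hcont.integrable_of_hasCompactSupport (line_comp_support hsupp hu x)
  have hF'i : Integrable (fun t : ℝ => Dop u h (x + t • u)) :=
    hcont'.integrable_of_hasCompactSupport (line_comp_support (Dop_support hsupp) hu x)
  exact integral_eq_zero_of_hasDerivAt_of_integrable hF hF'i hFi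

/-- Iterated directional derivatives. -/
def iterD (us : List (ℝ × ℝ)) (p : ℝ × ℝ → ℝ) : ℝ × ℝ → ℝ := us.foldr Dop p

lemma iterD_contDiff (us : List (ℝ × ℝ)) {p : ℝ × ℝ → ℝ} (hp : ContDiff ℝ ∞ p) :
    ContDiff ℝ ∞ (iterD us p) := by
  induction us with
  | nil => exact hp
  | cons v rest ih => exact Dop_contDiff ih

lemma iterD_support (us : List (ℝ × ℝ)) {p : ℝ × ℝ → ℝ} (hp : HasCompactSupport p) :
    HasCompactSupport (iterD us p) := by
  induction us with
  | nil => exact hp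
  | cons v rest ih => exact Dop_support ih

lemma iterD_pull {u : ℝ × ℝ} {us : List (ℝ × ℝ)} {p : ℝ × ℝ → ℝ}
    (hp : ContDiff ℝ ∞ p) (hmem : u ∈ us) :
    ∃ vs : List (ℝ × ℝ), iterD us p = Dop u (iterD vs p) := by
  induction us with
  | nil => cases hmem
  | cons v rest ih =>
    by_cases hv : v = u
    · exact ⟨rest, by rw [hv]; rfl⟩
    · have hur : u ∈ rest := by
        rcases List.mem_cons.mp hmem with h | h
        · exact absurd h.symm hv
        · exact h
      obtain ⟨vs, hvs⟩ := ih hur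
      refine ⟨v :: vs, ?_⟩
      calc iterD (v :: rest) p = Dop v (iterD rest p) := rfl
        _ = Dop v (Dop u (iterD vs p)) := by rw [hvs]
        _ = Dop u (Dop v (iterD vs p)) := Dop_comm (iterD_contDiff vs hp)
        _ = Dop u (iterD (v :: vs) p) := rfl

lemma iterD_line_zero {us : List (ℝ × ℝ)} {p : ℝ × ℝ → ℝ}
    (hp : ContDiff ℝ ∞ p) (hps : HasCompactSupport p) {u : ℝ × ℝ} (hu : u ≠ 0)
    (hmem : u ∈ us) (x : ℝ × ℝ) :
    ∫ t : ℝ, iterD us p (x + t • u) = 0 := by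
  obtain ⟨vs, hvs⟩ := iterD_pull hp hmem
  rw [hvs]
  exact line_integral_Dop_eq_zero hu (iterD_contDiff vs hp) (iterD_support vs hps) x

/-- If a directional derivative of a compactly supported differentiable function
vanishes identically, the function vanishes. -/
lemma zero_of_Dop_zero {u : ℝ × ℝ} (hu : u ≠ 0) {h : ℝ × ℝ → ℝ}
    (hdiff : Differentiable ℝ h) (hsupp : HasCompactSupport h)
    (hz : ∀ x, Dop u h x = 0) (x : ℝ × ℝ) : h x = 0 := by
  obtain ⟨R, hR⟩ := hsupp.isBounded.subset_closedBall 0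
  have hu' : 0 < ‖u‖ := norm_pos_iff.mpr hu
  set F : ℝ → ℝ := fun t => h (x + t • u) with hFdef
  have hline : ∀ t : ℝ, HasDerivAt (fun s : ℝ => x + s • u) u t := fun t => by
    simpa using ((hasDerivAt_id t).smul_const u).const_add x
  have hF : ∀ t : ℝ, HasDerivAt F 0 t := by
    intro t
    have h0 := ((hdiff (x + t • u)).hasFDerivAt).comp_hasDerivAt t (hline t)
    have : fderiv ℝ h (x + t • u) u = 0 := hz (x + t • u)
    rw [this] at h0
    exact h0
  set T : ℝ := (R + ‖x‖) / ‖u‖ + 1 with hT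
  have hconst : F 0 = F T := by
    apply is_const_of_deriv_eq_zero (fun t => (hF t).differentiableAt)
    intro t; exact (hF t).deriv
  have hTout : h (x + T • u) = 0 := by
    apply image_eq_zero_of_notMem_tsupport
    intro hmem
    have h3 : ‖x + T • u‖ ≤ R := by
      have := hR hmem
      simpa [Metric.mem_closedBall, dist_zero_right] using this
    have hR0 : 0 ≤ R := le_trans (norm_nonneg _) h3
    have h4 : ‖T • u‖ ≤ ‖x + T • u‖ + ‖x‖ := by
      calc ‖T • u‖ = ‖(x + T • u) - x‖ := by congr 1; abel
      _ ≤ ‖x + T • u‖ + ‖x‖ := norm_sub_le _ _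
    have hTpos : 0 < T := by
      rw [hT]
      positivity
    have h5 : ‖T • u‖ = T * ‖u‖ := by
      rw [norm_smul, Real.norm_eq_abs, abs_of_pos hTpos]
    have h6 : T * ‖u‖ = (R + ‖x‖) + ‖u‖ := by
      rw [hT, add_mul, one_mul, div_mul_cancel₀ _ (ne_of_gt hu')]
    linarith
  calc h x = F 0 := by simp [hFdef]
  _ = F T := hconst
  _ = 0 := hTout


lemma iterD_forall_zero {us : List (ℝ × ℝ)} {p : ℝ × ℝ → ℝ}
    (hp : ContDiff ℝ ∞ p) (hps : HasCompactSupport p)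
    (hus : ∀ u ∈ us, u ≠ 0) (hz : ∀ x, iterD us p x = 0) : ∀ x, p x = 0 := by
  induction us with
  | nil => exact hz
  | cons v rest ih =>
    have hv : v ≠ 0 := hus v (List.mem_cons_self)
    have hz' : ∀ x, iterD rest p x = 0 := by
      apply zero_of_Dop_zero hv
        ((iterD_contDiff rest hp).differentiable (by decide))
        (iterD_support rest hps)
      exact hz
    exact ih (fun u hu => hus u (List.mem_cons_of_mem v hu)) hz'

lemma Xbeam_linear (u : ℝ × ℝ) (a b : ℝ) (g : ℝ × ℝ → ℝ) (x : ℝ × ℝ) :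
    Xbeam u (fun y => g y * a + g y * b) x = (a + b) * Xbeam u g x := by
  unfold Xbeam
  rw [← integral_const_mul]
  congr 1
  funext t
  ring

lemma Xbeam_add_neg {g : ℝ × ℝ → ℝ} (hgc : Continuous g) (hgs : HasCompactSupport g)
    {u : ℝ × ℝ} (hu : u ≠ 0) (x : ℝ × ℝ) :
    Xbeam u g x + Xbeam (-u) g x = ∫ t : ℝ, g (x + t • u) := by
  have hG : Continuous (fun t : ℝ => g (x + t • u)) := hgc.comp (by continuity)
  have hGi : Integrable (fun t : ℝ => g (x + t • u)) :=
    hG.integrable_of_hasCompactSupport (line_comp_support hgs hu x)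
  have h2 : Xbeam (-u) g x = ∫ t in Set.Iic (0 : ℝ), g (x + t • u) := by
    unfold Xbeam
    have hptw : ∀ t : ℝ, x + t • (-u) = x + (-t) • u := by
      intro t; rw [smul_neg, neg_smul]
    simp_rw [hptw]
    have := integral_comp_neg_Ioi (0 : ℝ) (fun t => g (x + t • u))
    simpa using this
  rw [h2, add_comm]
  exact intervalIntegral.integral_Iic_add_Ioi hGi.integrableOn hGi.integrableOn

lemma pair_sum_zero (c₀ : ℝ) {u : ℝ × ℝ} (hu : u ≠ 0) {g : ℝ × ℝ → ℝ}
    (hgc : Continuous g) (hgs : HasCompactSupport g) (x : ℝ × ℝ)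
    (hline : ∫ t : ℝ, g (x + t • u) = 0) :
    c₀ • (Xbeam u (fun y => g y * u.1 + g y * u.2) x,
          Xbeam u (fun y => g y * (perp2 u).1 + g y * (perp2 u).2) x)
    + (-c₀) • (Xbeam (-u) (fun y => g y * (-u).1 + g y * (-u).2) x,
          Xbeam (-u) (fun y => g y * (perp2 (-u)).1 + g y * (perp2 (-u)).2) x) = 0 := by
  have hAB : Xbeam u g x + Xbeam (-u) g x = 0 := by
    rw [Xbeam_add_neg hgc hgs hu x]; exact hline
  have e1 := Xbeam_linear u u.1 u.2 g x
  have e2 := Xbeam_linear u (perp2 u).1 (perp2 u).2 g x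
  have e3 := Xbeam_linear (-u) (-u).1 (-u).2 g x
  have e4 := Xbeam_linear (-u) (perp2 (-u)).1 (perp2 (-u)).2 g x
  have hp1 : (perp2 u).1 = -u.2 := rfl
  have hp2 : (perp2 u).2 = u.1 := rfl
  have hp3 : (perp2 (-u)).1 = u.2 := by simp [perp2]
  have hp4 : (perp2 (-u)).2 = -u.1 := rfl
  have hn1 : (-u).1 = -u.1 := rfl
  have hn2 : (-u).2 = -u.2 := rfl
  have hB : Xbeam (-u) g x = -Xbeam u g x := by linarith
  rw [Prod.smul_mk, Prod.smul_mk, Prod.mk_add_mk, Prod.mk.injEq]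
  constructor
  · rw [e1, e3, hn1, hn2, hB]
    simp only [Prod.fst_zero, smul_eq_mul]
    ring
  · rw [e2, e4, hp1, hp2, hp3, hp4, hB]
    simp only [Prod.snd_zero, smul_eq_mul]
    ring


lemma sum_range_add' {M : Type*} [AddCommMonoid M] (f : ℕ → M) (a b : ℕ) :
    ∑ j ∈ Finset.range (a + b), f j
      = ∑ j ∈ Finset.range a, f j + ∑ j ∈ Finset.range b, f (a + j) := by
  induction b with
  | zero => simp
  | succ n ih =>
      rw [Nat.add_succ, Finset.sum_range_succ, ih, Finset.sum_range_succ, add_assoc]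

end Stmt17Aux

/-- a symmetric star transform is not injective on compactly
supported C² vector fields. -/
theorem stmt17 (m : ℕ) (γ : Fin m → ℝ × ℝ) (c : Fin m → ℝ)
    (hγu : ∀ i, (γ i).1 ^ 2 + (γ i).2 ^ 2 = 1) (hγd : Function.Injective γ)
    (hc : ∀ i, c i ≠ 0) (hsym : StarSymmetric m γ c) :
    ∃ f₁ f₂ : ℝ × ℝ → ℝ, IsC2c f₁ ∧ IsC2c f₂ ∧
      ¬ (∀ x, f₁ x = 0 ∧ f₂ x = 0) ∧
      ∀ x, starS m γ c f₁ f₂ x = 0 := by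
  classical
  obtain ⟨k, hk, σ, hσ⟩ := hsym
  set B : ContDiffBump ((0 : ℝ × ℝ)) := ⟨1, 2, one_pos, one_lt_two⟩ with hB
  set p : ℝ × ℝ → ℝ := ⇑B with hpdef
  have hp : ContDiff ℝ ∞ p := B.contDiff
  have hps : HasCompactSupport p := B.hasCompactSupport
  have hp0 : p 0 = 1 := B.one_of_mem_closedBall (by simp [hB])
  set us : List (ℝ × ℝ) :=
    ((List.finRange m).filter (fun i : Fin m => decide ((i : ℕ) < k))).map (fun i => γ (σ i))
    with husdef
  have husne : ∀ u ∈ us, u ≠ 0 := by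
    intro u hu
    rw [husdef, List.mem_map] at hu
    obtain ⟨i, _, rfl⟩ := hu
    intro h0
    have h1 := hγu (σ i)
    rw [h0] at h1
    norm_num at h1
  set g : ℝ × ℝ → ℝ := Stmt17Aux.iterD us p with hgdef
  have hgc : ContDiff ℝ ∞ g := Stmt17Aux.iterD_contDiff us hp
  have hgs : HasCompactSupport g := Stmt17Aux.iterD_support us hps
  refine ⟨g, g, ⟨hgc.of_le (by decide), hgs⟩, ⟨hgc.of_le (by decide), hgs⟩, ?_, ?_⟩
  · intro hall
    have hz : ∀ y, g y = 0 := fun y => (hall y).1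
    have hpz := Stmt17Aux.iterD_forall_zero hp hps husne hz 0
    rw [hp0] at hpz
    norm_num at hpz
  · intro x
    set F : Fin m → ℝ × ℝ := fun i => c i •
      (Xbeam (γ i) (fun y => g y * (γ i).1 + g y * (γ i).2) x,
       Xbeam (γ i) (fun y => g y * (perp2 (γ i)).1 + g y * (perp2 (γ i)).2) x) with hF
    have hstar : starS m γ c g g x = ∑ i, F i := rfl
    set G : ℕ → ℝ × ℝ := fun j => if hj : j < m then F (σ ⟨j, hj⟩) else 0 with hG
    have h1 : ∑ i, F i = ∑ j ∈ Finset.range m, G j := by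
      rw [← Equiv.sum_comp σ F, ← Fin.sum_univ_eq_sum_range G m]
      apply Finset.sum_congr rfl
      intro i _
      rw [hG]
      simp only [Fin.is_lt, dif_pos, Fin.eta]
    have hpair : ∀ j < k, G j + G (k + j) = 0 := by
      intro j hj
      have hj1 : j < m := by omega
      have hj2 : k + j < m := by omega
      obtain ⟨hγe, hce⟩ := hσ ⟨j, hj1⟩ (by simpa using hj)
      set i₁ : Fin m := σ ⟨j, hj1⟩ with hi₁
      set i₂ : Fin m := σ ⟨k + j, hj2⟩ with hi₂
      have hγe' : γ i₁ = -(γ i₂) := by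
        rw [hγe, hi₂]
        congr 2
        apply Fin.ext
        simp [Nat.add_comm]
      have hce' : c i₁ = -(c i₂) := by
        rw [hce, hi₂]
        congr 2
        apply Fin.ext
        simp [Nat.add_comm]
      have hγ2 : γ i₂ = -(γ i₁) := by rw [hγe']; simp
      have hc2 : c i₂ = -(c i₁) := by rw [hce']; simp
      have hmem : γ i₁ ∈ us := by
        rw [husdef, List.mem_map]
        exact ⟨⟨j, hj1⟩, by
          rw [List.mem_filter]
          exact ⟨List.mem_finRange _, by simpa using hj⟩, rfl⟩
      have hu : γ i₁ ≠ 0 := husne _ hmem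
      have hline : ∫ t : ℝ, g (x + t • (γ i₁)) = 0 :=
        Stmt17Aux.iterD_line_zero hp hps hu hmem x
      have hGj : G j = F i₁ := by rw [hG]; simp only [dif_pos hj1]; rfl
      have hGkj : G (k + j) = F i₂ := by rw [hG]; simp only [dif_pos hj2]; rfl
      rw [hGj, hGkj, hF]
      simp only [hγ2, hc2]
      exact Stmt17Aux.pair_sum_zero (c i₁) hu (hgc.continuous) hgs x hline
    rw [hstar, h1, hk, two_mul, Stmt17Aux.sum_range_add' G k k,
      ← Finset.sum_add_distrib]
    apply Finset.sum_eq_zero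
    intro j hj
    exact hpair j (Finset.mem_range.mp hj)
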